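/- Let Ŝ = {j : β̂ⱼ ≠ 0} for the adaptive elastic net minimizer β̂, and suppose X_Ŝᵀ X_Ŝ + λ₂ I is invertible (which always holds for λ₂ > 0). Then β̂ restricted to Ŝ equals (X_Ŝᵀ X_Ŝ + λ₂ I)⁻¹ (X_Ŝᵀ y − λ₁ w_Ŝ ∘ ŝ), where ŝ is the sign vector of β̂ on Ŝ and ∘ denotes componentwise multiplication. -/

import Mathlib

open Matrix


lemma aen_kkt {n p : ℕ} (y : Fin n → ℝ)
    (X : Matrix (Fin n) (Fin p) ℝ) (l1 l2 : ℝ) (w : Fin p → ℝ)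
    (βhat : Fin p → ℝ)
    (hmin : ∀ b : Fin p → ℝ,
      (1 / 2) * ∑ i, (y i - X.mulVec βhat i) ^ 2 + (1 / 2) * l2 * ∑ j, (βhat j) ^ 2 +
        l1 * ∑ j, w j * |βhat j| ≤
      (1 / 2) * ∑ i, (y i - X.mulVec b i) ^ 2 + (1 / 2) * l2 * ∑ j, (b j) ^ 2 +
        l1 * ∑ j, w j * |b j|)
    (k : Fin p) (hk : βhat k ≠ 0) :
    ∑ i, X i k * (X.mulVec βhat i - y i) + l2 * βhat k
      + l1 * w k * Real.sign (βhat k) = 0 := by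
  set t0 := βhat k with ht0
  have habs : HasDerivAt (fun t : ℝ => |t|) (Real.sign t0) t0 := by
    rcases hk.lt_or_gt with h | h
    · simpa [Real.sign_of_neg h] using hasDerivAt_abs_neg h
    · simpa [Real.sign_of_pos h] using hasDerivAt_abs_pos h
  set F : ℝ → ℝ := fun t =>
    (1/2) * ∑ i, (y i - X.mulVec βhat i - X i k * (t - t0)) ^ 2
    + (1/2) * l2 * ∑ j, (if j = k then t else βhat j) ^ 2
    + l1 * ∑ j, w j * |if j = k then t else βhat j| with hF
  have hmv : ∀ t i, X.mulVec (Function.update βhat k t) i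
      = X.mulVec βhat i + X i k * (t - t0) := by
    intro t i
    simp only [Matrix.mulVec, dotProduct, Function.update_apply]
    rw [Finset.sum_congr rfl (fun j _ =>
      show X i j * (if j = k then t else βhat j)
        = X i j * βhat j + (if j = k then X i k * (t - t0) else 0) from by
      split
      · next h => subst h; rw [← ht0]; ring
      · ring)]
    rw [Finset.sum_add_distrib, Finset.sum_ite_eq' Finset.univ k]
    simp
  have hFobj : ∀ t, F t =
      (1 / 2) * ∑ i, (y i - X.mulVec (Function.update βhat k t) i) ^ 2
      + (1 / 2) * l2 * ∑ j, (Function.update βhat k t j) ^ 2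
      + l1 * ∑ j, w j * |Function.update βhat k t j| := by
    intro t
    simp only [hF, Function.update_apply, hmv]
    have : (1:ℝ)/2 * ∑ i, (y i - X.mulVec βhat i - X i k * (t - t0)) ^ 2
        = 1/2 * ∑ i, (y i - (X.mulVec βhat i + X i k * (t - t0))) ^ 2 := by
      refine congrArg _ (Finset.sum_congr rfl fun i _ => by ring)
    rw [this]
  have hloc : IsLocalMin F t0 := by
    refine Filter.Eventually.of_forall fun t => ?_
    have h1 : F t0 =
      (1 / 2) * ∑ i, (y i - X.mulVec βhat i) ^ 2 + (1 / 2) * l2 * ∑ j, (βhat j) ^ 2 +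
        l1 * ∑ j, w j * |βhat j| := by
      rw [hFobj, Function.update_eq_self]
    rw [h1, hFobj t]
    exact hmin _
  have hd : HasDerivAt F
      ((1/2) * ∑ i, (2 * (y i - X.mulVec βhat i) ^ 1 * (-(X i k)))
        + (1/2) * l2 * (2 * t0) + l1 * (w k * Real.sign t0)) t0 := by
    have h1 : HasDerivAt (fun t : ℝ =>
        (1/2) * ∑ i, (y i - X.mulVec βhat i - X i k * (t - t0)) ^ 2)
        ((1/2) * ∑ i, (2 * (y i - X.mulVec βhat i) ^ 1 * (-(X i k)))) t0 := by
      refine HasDerivAt.const_mul _ ?_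
      have := HasDerivAt.fun_sum (u := Finset.univ)
        (A := fun i t => (y i - X.mulVec βhat i - X i k * (t - t0)) ^ 2)
        (A' := fun i => 2 * (y i - X.mulVec βhat i) ^ 1 * (-(X i k))) (x := t0) ?_
      · exact this
      · intro i _
        have hin : HasDerivAt (fun t : ℝ => y i - X.mulVec βhat i - X i k * (t - t0))
            (-(X i k)) t0 := by
          have : HasDerivAt (fun t : ℝ => X i k * (t - t0)) (X i k) t0 := by
            simpa using (((hasDerivAt_id t0).sub_const t0).const_mul (X i k))
          simpa using this.const_sub (y i - X.mulVec βhat i)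
        have := hin.fun_pow 2
        simpa using this
    have h2 : HasDerivAt (fun t : ℝ =>
        (1/2) * l2 * ∑ j, (if j = k then t else βhat j) ^ 2)
        ((1/2) * l2 * (2 * t0)) t0 := by
      refine HasDerivAt.const_mul _ ?_
      have := HasDerivAt.fun_sum (u := Finset.univ)
        (A := fun (j : Fin p) t => (if j = k then t else βhat j) ^ 2)
        (A' := fun j => if j = k then 2 * t0 else 0) (x := t0) ?_
      · simpa [Finset.sum_ite_eq'] using this
      · intro j _
        by_cases h : j = k
        · subst h; simpa using hasDerivAt_pow 2 t0
        · simp only [if_neg h]; exact hasDerivAt_const _ _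
    have h3 : HasDerivAt (fun t : ℝ =>
        l1 * ∑ j, w j * |if j = k then t else βhat j|)
        (l1 * (w k * Real.sign t0)) t0 := by
      refine HasDerivAt.const_mul _ ?_
      have := HasDerivAt.fun_sum (u := Finset.univ)
        (A := fun (j : Fin p) t => w j * |if j = k then t else βhat j|)
        (A' := fun j => if j = k then w k * Real.sign t0 else 0) (x := t0) ?_
      · simpa [Finset.sum_ite_eq'] using this
      · intro j _
        by_cases h : j = k
        · subst h; simpa using habs.const_mul (w j)
        · simp only [if_neg h]; exact hasDerivAt_const _ _
    exact (h1.add h2).add h3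
  have hz := hloc.deriv_eq_zero
  rw [hd.deriv] at hz
  have hsum : ∑ i, X i k * (X.mulVec βhat i - y i)
      = (1/2) * ∑ i, (2 * (y i - X.mulVec βhat i) ^ 1 * (-(X i k))) := by
    rw [Finset.mul_sum]
    exact Finset.sum_congr rfl fun i _ => by ring
  rw [hsum]
  linarith [hz]

/-- Closed form of the adaptive elastic net on its active set
`Ŝ = {j : β̂ⱼ ≠ 0}`: the Gram matrix `X_ŜᵀX_Ŝ + λ₂I` is invertible, and
`β̂_Ŝ = (X_ŜᵀX_Ŝ + λ₂I)⁻¹ (X_Ŝᵀy − λ₁ w_Ŝ ∘ ŝ)`. -/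
theorem aen_active_set_closed_form {n p : ℕ} (y : Fin n → ℝ)
    (X : Matrix (Fin n) (Fin p) ℝ) (l1 l2 : ℝ) (w : Fin p → ℝ)
    (hl1 : 0 ≤ l1) (hl2 : 0 < l2) (hw : ∀ j, 0 < w j)
    (βhat : Fin p → ℝ) [DecidablePred fun j => βhat j ≠ 0]
    (hmin : ∀ b : Fin p → ℝ,
      (1 / 2) * ∑ i, (y i - X.mulVec βhat i) ^ 2 + (1 / 2) * l2 * ∑ j, (βhat j) ^ 2 +
        l1 * ∑ j, w j * |βhat j| ≤
      (1 / 2) * ∑ i, (y i - X.mulVec b i) ^ 2 + (1 / 2) * l2 * ∑ j, (b j) ^ 2 +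
        l1 * ∑ j, w j * |b j|) :
    letI XS : Matrix (Fin n) {j // βhat j ≠ 0} ℝ := X.submatrix id Subtype.val
    IsUnit (XSᵀ * XS + l2 • (1 : Matrix {j // βhat j ≠ 0} {j // βhat j ≠ 0} ℝ)).det ∧
    (fun s : {j // βhat j ≠ 0} => βhat s.val) =
      (XSᵀ * XS + l2 • (1 : Matrix {j // βhat j ≠ 0} {j // βhat j ≠ 0} ℝ))⁻¹.mulVec
        (XSᵀ.mulVec y - fun s => l1 * w s.val * Real.sign (βhat s.val)) := by
  have kkt : ∀ k, βhat k ≠ 0 → ∑ i, X i k * (X.mulVec βhat i - y i) + l2 * βhat k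
      + l1 * w k * Real.sign (βhat k) = 0 := fun k hk => aen_kkt y X l1 l2 w βhat hmin k hk
  have hsum : ∀ i, ∑ s : {j // βhat j ≠ 0}, X i s.val * βhat s.val = X.mulVec βhat i := by
    intro i
    calc ∑ s : {j // βhat j ≠ 0}, X i s.val * βhat s.val
        = ∑ j ∈ Finset.univ.filter (fun j => βhat j ≠ 0), X i j * βhat j :=
          (Finset.sum_subtype (Finset.univ.filter fun j => βhat j ≠ 0)
            (fun j => by simp) (fun j => X i j * βhat j)).symm
      _ = ∑ j, X i j * βhat j := Finset.sum_subset (Finset.filter_subset _ _)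
          (fun j _ hj => by
            simp only [Finset.mem_filter, Finset.mem_univ, true_and, not_not] at hj
            simp [hj])
      _ = X.mulVec βhat i := by simp [Matrix.mulVec, dotProduct]
  set S := {j // βhat j ≠ 0} with hS
  set XS : Matrix (Fin n) S ℝ := X.submatrix id Subtype.val with hXS
  set A : Matrix S S ℝ := XSᵀ * XS + l2 • (1 : Matrix S S ℝ) with hA
  have hpd : A.PosDef := by
    rw [hA, Matrix.smul_one_eq_diagonal]
    have h1 : (XSᵀ * XS).PosSemidef := by
      have := Matrix.posSemidef_conjTranspose_mul_self XS
      have hct : XSᴴ = XSᵀ := by ext i j; simp [Matrix.conjTranspose_apply]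
      rwa [hct] at this
    exact Matrix.PosDef.posSemidef_add h1 (Matrix.PosDef.diagonal fun _ => hl2)
  have hunit : IsUnit A.det := hpd.det_pos.ne'.isUnit
  refine ⟨hunit, ?_⟩
  set v : S → ℝ := fun s => βhat s.val with hv
  have hAv : A.mulVec v = XSᵀ.mulVec y - fun s => l1 * w s.val * Real.sign (βhat s.val) := by
    funext s
    have hk := kkt s.val s.prop
    simp only [hA, Matrix.add_mulVec, Matrix.smul_mulVec, Matrix.one_mulVec,
      Pi.add_apply, Pi.smul_apply, smul_eq_mul, Pi.sub_apply]
    have h1 : (XSᵀ * XS).mulVec v s = ∑ i, X i s.val * X.mulVec βhat i := by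
      calc (XSᵀ * XS).mulVec v s
          = ∑ t : S, (∑ i, X i s.val * X i t.val) * βhat t.val := by
            simp [Matrix.mulVec, dotProduct, Matrix.mul_apply, hXS, hv]
        _ = ∑ t : S, ∑ i, X i s.val * X i t.val * βhat t.val := by
            refine Finset.sum_congr rfl fun t _ => Finset.sum_mul _ _ _
        _ = ∑ i, ∑ t : S, X i s.val * X i t.val * βhat t.val := Finset.sum_comm
        _ = ∑ i, X i s.val * ∑ t : S, X i t.val * βhat t.val := by
            refine Finset.sum_congr rfl fun i _ => ?_
            rw [Finset.mul_sum]; exact Finset.sum_congr rfl fun t _ => by ring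
        _ = ∑ i, X i s.val * X.mulVec βhat i :=
            Finset.sum_congr rfl fun i _ => by rw [hsum i]
    rw [h1]
    have h2 : XSᵀ.mulVec y s = ∑ i, X i s.val * y i := by
      simp [Matrix.mulVec, dotProduct, hXS]
    rw [h2]
    have h3 : ∑ i, X i s.val * X.mulVec βhat i - ∑ i, X i s.val * y i
        = ∑ i, X i s.val * (X.mulVec βhat i - y i) := by
      rw [← Finset.sum_sub_distrib]
      exact Finset.sum_congr rfl fun i _ => by ring
    have hvs : v s = βhat s.val := rfl
    rw [hvs]
    linarith [hk, h3]
  have hfin : A⁻¹.mulVec (A.mulVec v) = v := by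
    rw [Matrix.mulVec_mulVec, Matrix.nonsing_inv_mul A hunit, Matrix.one_mulVec]
  rw [← hAv, hfin]
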